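/- Let p > 0, Ψ ≥ 0, Q ≥ 0, a ∈ [0, 1], T ≥ 0 with T² ≤ Ψ. With Q' = max(Q − T/p, 0) + a, it holds that Q'²/2 − Q²/2 ≤ (p² + Ψ)/(2p²) − Q(T/p − a). -/

import Mathlib

theorem stmt_14 (p Ψ Q a T : ℝ) (hp : 0 < p) (hΨ : 0 ≤ Ψ) (hQ : 0 ≤ Q)
    (ha0 : 0 ≤ a) (ha1 : a ≤ 1) (hT : 0 ≤ T) (hT2 : T ^ 2 ≤ Ψ) :
    (max (Q - T / p) 0 + a) ^ 2 / 2 - Q ^ 2 / 2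
      ≤ (p ^ 2 + Ψ) / (2 * p ^ 2) - Q * (T / p - a) := by
  have hp2 : 0 < p ^ 2 := by positivity
  set t := T / p with htdef
  have ht : 0 ≤ t := div_nonneg hT hp.le
  have ht2 : t ^ 2 ≤ Ψ / p ^ 2 := by
    rw [le_div_iff₀ hp2, htdef, div_pow, div_mul_cancel₀ _ hp2.ne']
    exact hT2
  have hsplit : (p ^ 2 + Ψ) / (2 * p ^ 2) = 1 / 2 + (Ψ / p ^ 2) / 2 := by
    field_simp
  rw [hsplit]
  set s := Ψ / p ^ 2
  rcases le_or_gt (Q - t) 0 with h | h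
  · rw [max_eq_right h]
    nlinarith [sq_nonneg (Q - t), sq_nonneg a, mul_nonneg hQ ha0]
  · rw [max_eq_left h.le]
    nlinarith [mul_nonneg ht ha0, sq_nonneg a]
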